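/- Suppose nonnegative sequences satisfy ε_t ≤ A₅ p_t + A₆ p_{t-1} + A₇ ε_{t-1} + A₈ w_t and p_t ≤ A₉ ε_t + A₁₀ ε_{t-1} + A₄ p_{t-1} + A₁₁ w_t for all t ≥ 1, with all constants nonnegative, B̄₁ > A₅, and B̄₁ A₉ < 1. Then with B₁ = (B̄₁ − A₅)/(1 − B̄₁A₉), B₂ = max{(B̄₁A₁₀ + A₇)/(1 − B̄₁A₉), (B̄₁A₄ + A₆)/(B̄₁ − A₅)}, and B₃ = (B̄₁A₁₁ + A₈)/(1 − B̄₁A₉), one has ε_t + B₁ p_t ≤ B₂(ε_{t-1} + B₁ p_{t-1}) + B₃ w_t. -/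
import Mathlib


/-- Combining two coupled linear recursions into a single contraction. -/
theorem stmt_14 (ε p w : ℕ → ℝ)
    (hε : ∀ t, 0 ≤ ε t) (hp : ∀ t, 0 ≤ p t) (hw : ∀ t, 0 ≤ w t)
    (A₄ A₅ A₆ A₇ A₈ A₉ A₁₀ A₁₁ Bbar₁ : ℝ)
    (hA₄ : 0 ≤ A₄) (hA₅ : 0 ≤ A₅) (hA₆ : 0 ≤ A₆) (hA₇ : 0 ≤ A₇) (hA₈ : 0 ≤ A₈)
    (hA₉ : 0 ≤ A₉) (hA₁₀ : 0 ≤ A₁₀) (hA₁₁ : 0 ≤ A₁₁)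
    (hBbar₁ : A₅ < Bbar₁) (hBbar₁A₉ : Bbar₁ * A₉ < 1)
    (hrec1 : ∀ t, 1 ≤ t → ε t ≤ A₅ * p t + A₆ * p (t - 1) + A₇ * ε (t - 1) + A₈ * w t)
    (hrec2 : ∀ t, 1 ≤ t → p t ≤ A₉ * ε t + A₁₀ * ε (t - 1) + A₄ * p (t - 1) + A₁₁ * w t)
    (B₁ B₂ B₃ : ℝ)
    (hB₁ : B₁ = (Bbar₁ - A₅) / (1 - Bbar₁ * A₉))
    (hB₂ : B₂ = max ((Bbar₁ * A₁₀ + A₇) / (1 - Bbar₁ * A₉)) ((Bbar₁ * A₄ + A₆) / (Bbar₁ - A₅)))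
    (hB₃ : B₃ = (Bbar₁ * A₁₁ + A₈) / (1 - Bbar₁ * A₉)) :
    ∀ t, 1 ≤ t → ε t + B₁ * p t ≤ B₂ * (ε (t - 1) + B₁ * p (t - 1)) + B₃ * w t := by
  intro t ht
  have h1 := hrec1 t ht
  have h2 := hrec2 t ht
  have hD : 0 < 1 - Bbar₁ * A₉ := by linarith
  have hE : 0 < Bbar₁ - A₅ := by linarith
  have hBb : 0 ≤ Bbar₁ := le_of_lt (lt_of_le_of_lt hA₅ hBbar₁)
  have hB₁' : B₁ * (1 - Bbar₁ * A₉) = Bbar₁ - A₅ := by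
    rw [hB₁]; field_simp
  have hB₃' : B₃ * (1 - Bbar₁ * A₉) = Bbar₁ * A₁₁ + A₈ := by
    rw [hB₃]; field_simp
  have hB₂1 : Bbar₁ * A₁₀ + A₇ ≤ B₂ * (1 - Bbar₁ * A₉) := by
    rw [hB₂, ← div_le_iff₀ hD]
    exact le_max_left _ _
  have hB₂2 : Bbar₁ * A₄ + A₆ ≤ B₂ * (Bbar₁ - A₅) := by
    rw [hB₂, ← div_le_iff₀ hE]
    exact le_max_right _ _
  have key : (ε t + B₁ * p t) * (1 - Bbar₁ * A₉) ≤
      (B₂ * (ε (t - 1) + B₁ * p (t - 1)) + B₃ * w t) * (1 - Bbar₁ * A₉) := by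
    have t1 := mul_le_mul_of_nonneg_left h2 hBb
    have t2 := mul_le_mul_of_nonneg_right hB₂1 (hε (t - 1))
    have t3 := mul_le_mul_of_nonneg_right hB₂2 (hp (t - 1))
    have e1 : B₁ * (1 - Bbar₁ * A₉) * p t = (Bbar₁ - A₅) * p t := by rw [hB₁']
    have e2 : B₂ * (B₁ * (1 - Bbar₁ * A₉)) * p (t - 1) = B₂ * (Bbar₁ - A₅) * p (t - 1) := by
      rw [hB₁']
    have e3 : B₃ * (1 - Bbar₁ * A₉) * w t = (Bbar₁ * A₁₁ + A₈) * w t := by rw [hB₃']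
    nlinarith [hw t, hε t, hp t]
  exact le_of_mul_le_mul_right key hD
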